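/- For every u* ∈ (0,1) there exists a constant C > 0 such that for every natural number m ≥ 3, the supremum over all u with |u| ≤ u* and all ξ, x ∈ ℝ of |∂_u^m [cos(θ_K(γ(u)(x−ξ)))]| is at most (m−3)!·C^{2m−3}, where ∂_u^m denotes the m-fold partial derivative with respect to u. -/

import Mathlib

noncomputable def θK (x : ℝ) : ℝ := 4 * Real.arctan (Real.exp x)

noncomputable def γ (u : ℝ) : ℝ := 1 / Real.sqrt (1 - u ^ 2)

noncomputable def gC (w : ℂ) : ℂ := ((1 : ℂ) - w ^ 2) ^ (-(1/2) : ℂ)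

lemma normSq_cosh' (x y : ℝ) :
    Complex.normSq (Complex.cosh (x + y * Complex.I)) = Real.sinh x ^ 2 + Real.cos y ^ 2 := by
  have h : Complex.cosh (x + y * Complex.I)
      = ((Real.cosh x * Real.cos y : ℝ) : ℂ) + ((Real.sinh x * Real.sin y : ℝ) : ℂ) * Complex.I := by
    rw [Complex.cosh_add, Complex.cosh_mul_I, Complex.sinh_mul_I]
    push_cast; ring
  rw [h, Complex.normSq_add_mul_I]
  nlinarith [Real.sin_sq_add_cos_sq y, Real.cosh_sq x]

lemma cosh_lower (z : ℂ) (h : |z.im| ≤ |z.re|) :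
    Real.cos 1 ≤ ‖Complex.cosh z‖ := by
  have hns : Complex.normSq (Complex.cosh z) = Real.sinh z.re ^ 2 + Real.cos z.im ^ 2 := by
    conv_lhs => rw [← Complex.re_add_im z]
    exact normSq_cosh' z.re z.im
  have hc1 : (0:ℝ) < Real.cos 1 := Real.cos_pos_of_mem_Ioo
    ⟨by linarith [Real.pi_gt_three], by linarith [Real.pi_gt_three]⟩
  have key : Real.cos 1 ^ 2 ≤ Real.sinh z.re ^ 2 + Real.cos z.im ^ 2 := by
    rcases le_or_gt (|z.im|) 1 with hy | hy
    · have hcc : Real.cos 1 ≤ Real.cos |z.im| :=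
        Real.cos_le_cos_of_nonneg_of_le_pi (abs_nonneg _) (by linarith [Real.pi_gt_three]) hy
      rw [Real.cos_abs] at hcc
      nlinarith [sq_nonneg (Real.sinh z.re)]
    · have hx : 1 < |z.re| := lt_of_lt_of_le hy h
      have h1 : Real.sinh 1 ≤ Real.sinh |z.re| := (Real.sinh_le_sinh).mpr hx.le
      have h2 : (1:ℝ) < Real.sinh 1 := Real.self_lt_sinh_iff.mpr one_pos
      have h3 : Real.sinh |z.re| ^ 2 = Real.sinh z.re ^ 2 := by
        rcases abs_cases z.re with ⟨h, _⟩ | ⟨h, _⟩ <;> rw [h] <;> simp [Real.sinh_neg]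
      nlinarith [Real.cos_le_one 1, sq_nonneg (Real.cos z.im)]
  calc Real.cos 1 = Real.sqrt (Real.cos 1 ^ 2) := by rw [Real.sqrt_sq hc1.le]
    _ ≤ Real.sqrt (Complex.normSq (Complex.cosh z)) := Real.sqrt_le_sqrt (by rw [hns]; exact key)
    _ = ‖Complex.cosh z‖ := (Complex.norm_def _).symm

lemma sin_le_cos_of_abs_le {t : ℝ} (h : |t| ≤ Real.pi / 4) : |Real.sin t| ≤ Real.cos t := by
  have h1 : |Real.sin t| = Real.sin |t| := by
    rcases abs_cases t with ⟨ht, ht0⟩ | ⟨ht, ht0⟩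
    · rw [ht, abs_of_nonneg (Real.sin_nonneg_of_nonneg_of_le_pi ht0 (by nlinarith [Real.pi_pos]))]
    · rw [ht, Real.sin_neg, abs_of_nonpos]
      exact Real.sin_nonpos_of_nonpos_of_neg_pi_le ht0.le (by nlinarith [Real.pi_pos])
  have h2 : Real.sin |t| ≤ Real.sin (Real.pi / 4) := by
    apply Real.strictMonoOn_sin.monotoneOn ?_ ?_ h
    · constructor <;> nlinarith [abs_nonneg t, Real.pi_pos]
    · constructor <;> nlinarith [Real.pi_pos]
  have h3 : Real.cos (Real.pi / 4) ≤ Real.cos |t| :=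
    Real.cos_le_cos_of_nonneg_of_le_pi (abs_nonneg t) (by nlinarith [Real.pi_pos]) h
  rw [h1, ← Real.cos_abs]
  calc Real.sin |t| ≤ Real.sin (Real.pi/4) := h2
    _ = Real.cos (Real.pi/4) := by rw [Real.sin_pi_div_four, Real.cos_pi_div_four]
    _ ≤ Real.cos |t| := h3

lemma gC_im_le_re {w : ℂ} (hw : 0 < ((1:ℂ) - w ^ 2).re) :
    |(gC w).im| ≤ (gC w).re := by
  set ζ : ℂ := (1:ℂ) - w ^ 2 with hζdef
  have hζ : ζ ≠ 0 := by
    intro h; rw [h] at hw; simp at hw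
  have hg : gC w = Complex.exp ((-(1/2) : ℂ) * Complex.log ζ) := by
    rw [gC, Complex.cpow_def_of_ne_zero hζ]; ring_nf
  have harg : |(Complex.log ζ).im| < Real.pi / 2 := by
    rw [Complex.log_im]
    exact Complex.abs_arg_lt_pi_div_two_iff.mpr (Or.inl hw)
  set c : ℂ := (-(1/2) : ℂ) * Complex.log ζ with hc
  have hcim : c.im = -(Complex.log ζ).im / 2 := by
    rw [hc]; simp; ring
  have hre : (Complex.exp c).re = Real.exp c.re * Real.cos c.im := Complex.exp_re c
  have him : (Complex.exp c).im = Real.exp c.re * Real.sin c.im := Complex.exp_im c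
  rw [hg, hre, him, abs_mul, abs_of_pos (Real.exp_pos _)]
  apply mul_le_mul_of_nonneg_left _ (Real.exp_pos _).le
  apply sin_le_cos_of_abs_le
  rw [hcim]
  rw [abs_div, abs_neg]
  have : |(2:ℝ)| = 2 := by norm_num
  rw [this]
  linarith [harg]

lemma cos_θK (y : ℝ) : Real.cos (θK y) = 1 - 2 / Real.cosh y ^ 2 := by
  set a := Real.arctan (Real.exp y) with ha
  have h4 : θK y = 2 * (2 * a) := by rw [θK]; ring
  set t := Real.exp y with ht
  have ht0 : (0:ℝ) < t := Real.exp_pos y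
  have he : (0:ℝ) < 1 + t ^ 2 := by positivity
  have hs : Real.sqrt (1 + t ^ 2) ^ 2 = 1 + t ^ 2 := Real.sq_sqrt he.le
  have hs0 : Real.sqrt (1 + t ^ 2) ≠ 0 := by positivity
  have hsin : Real.sin (2 * a) = 2 * t / (1 + t ^ 2) := by
    rw [Real.sin_two_mul, ha, Real.sin_arctan, Real.cos_arctan]
    field_simp
    exact hs.symm
  have hcos2 : Real.cos (2 * (2 * a)) = 1 - 2 * Real.sin (2 * a) ^ 2 := by
    rw [Real.cos_two_mul']
    linear_combination Real.sin_sq_add_cos_sq (2 * a)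
  have hch : Real.cosh y = (t + 1 / t) / 2 := by
    rw [Real.cosh_eq, Real.exp_neg, ← ht, inv_eq_one_div]
  have hch0 : Real.cosh y ≠ 0 := by positivity
  rw [h4, hcos2, hsin, hch]
  field_simp
  ring

lemma gC_real {u : ℝ} (hu : |u| < 1) : gC (u : ℂ) = ((γ u : ℝ) : ℂ) := by
  have h1 : (0:ℝ) < 1 - u ^ 2 := by nlinarith [abs_nonneg u, sq_abs u, hu]
  have h2 : ((1 : ℂ) - (u:ℂ) ^ 2) = ((1 - u ^ 2 : ℝ) : ℂ) := by push_cast; ring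
  have h3 : (-(1/2) : ℂ) = ((-(1/2) : ℝ) : ℂ) := by norm_num
  rw [gC, h2, h3, ← Complex.ofReal_cpow h1.le]
  congr 1
  rw [Real.rpow_neg h1.le, γ, Real.sqrt_eq_rpow]
  rw [one_div]
  norm_num

/-- transfer of iterated derivatives from ℂ to ℝ -/
lemma transfer {E : ℂ → ℂ} {U : Set ℂ} (hU : IsOpen U) (hE : DifferentiableOn ℂ E U)
    {f : ℝ → ℝ} {V : Set ℝ} (hV : IsOpen V) (hVU : ∀ v ∈ V, (v : ℂ) ∈ U)
    (hf : ∀ v ∈ V, ((f v : ℝ) : ℂ) = E v) :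
    ∀ m, ∀ v ∈ V, iteratedDeriv m f v = (iteratedDeriv m E v).re := by
  have hA : AnalyticOnNhd ℂ E U := hE.analyticOnNhd hU
  intro m
  induction m with
  | zero =>
    intro v hv
    simp only [iteratedDeriv_zero]
    rw [← hf v hv, Complex.ofReal_re]
  | succ m ih =>
    intro v hv
    have hEm : AnalyticOnNhd ℂ (iteratedDeriv m E) U := by
      rw [iteratedDeriv_eq_iterate]
      exact hA.iterated_deriv m
    have hdiff : DifferentiableAt ℂ (iteratedDeriv m E) (v : ℂ) :=
      (hEm (v : ℂ) (hVU v hv)).differentiableAt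
    have hder : HasDerivAt (fun w : ℝ => (iteratedDeriv m E (w : ℂ)).re)
        ((deriv (iteratedDeriv m E) (v : ℂ)).re) v :=
      (hdiff.hasDerivAt).real_of_complex
    have heq : (fun w : ℝ => iteratedDeriv m f w) =ᶠ[nhds v]
        (fun w : ℝ => (iteratedDeriv m E (w : ℂ)).re) := by
      filter_upwards [hV.mem_nhds hv] with w hw using ih w hw
    rw [iteratedDeriv_succ, heq.deriv_eq, hder.deriv, ← iteratedDeriv_succ]

/-- For every `u* ∈ (0,1)` there is a constant `C > 0` such that for every
`m ≥ 3`, all `|u| ≤ u*` and all `ξ, x ∈ ℝ`,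
`|∂_u^m [cos(θ_K(γ(u)(x−ξ)))]| ≤ (m−3)!·C^(2m−3)`. -/
theorem cos_kink_u_derivatives_bound (ustar : ℝ) (h0 : 0 < ustar) (h1 : ustar < 1) :
    ∃ C : ℝ, 0 < C ∧ ∀ m : ℕ, 3 ≤ m → ∀ u : ℝ, |u| ≤ ustar → ∀ ξ x : ℝ,
      |iteratedDeriv m (fun u' => Real.cos (θK (γ u' * (x - ξ)))) u|
        ≤ (m - 3).factorial * C ^ (2 * m - 3) := by
  have hc1 : (0:ℝ) < Real.cos 1 := Real.cos_pos_of_mem_Ioo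
    ⟨by linarith [Real.pi_gt_three], by linarith [Real.pi_gt_three]⟩
  set rr : ℝ := (1 - ustar) / 2 with hrrdef
  have hrr : 0 < rr := by rw [hrrdef]; linarith
  set M : ℝ := 1 + 2 / Real.cos 1 ^ 2 with hMdef
  have hM : 1 ≤ M := by
    have h : 0 < 2 / Real.cos 1 ^ 2 := by positivity
    rw [hMdef]; linarith
  set C : ℝ := max 1 (8 * M / rr) with hCdef
  have hC1 : (1:ℝ) ≤ C := le_max_left _ _
  refine ⟨C, lt_of_lt_of_le one_pos hC1, ?_⟩
  intro m hm u hu ξ x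
  set s : ℝ := x - ξ with hsdef
  set G : ℂ → ℂ := fun w => 1 - 2 / Complex.cosh ((s : ℂ) * gC w) ^ 2 with hGdef
  set U : Set ℂ := {w : ℂ | 0 < ((1:ℂ) - w ^ 2).re} with hUdef
  have hUopen : IsOpen U :=
    isOpen_lt continuous_const (Complex.continuous_re.comp (continuous_const.sub (continuous_pow 2)))
  -- cosh lower bound on U
  have hcosh : ∀ w ∈ U, Real.cos 1 ≤ ‖Complex.cosh ((s:ℂ) * gC w)‖ := by
    intro w hw
    apply cosh_lower
    have him : ((s:ℂ) * gC w).im = s * (gC w).im := by simp [Complex.mul_im]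
    have hre : ((s:ℂ) * gC w).re = s * (gC w).re := Complex.re_ofReal_mul s (gC w)
    have hg := gC_im_le_re hw
    have hgre : 0 ≤ (gC w).re := le_trans (abs_nonneg _) hg
    rw [him, hre, abs_mul, abs_mul, abs_of_nonneg hgre]
    exact mul_le_mul_of_nonneg_left hg (abs_nonneg s)
  have hcosh_ne : ∀ w ∈ U, Complex.cosh ((s:ℂ) * gC w) ≠ 0 := by
    intro w hw h
    have := hcosh w hw
    rw [h] at this; simp at this; linarith
  -- differentiability
  have hGdiff : DifferentiableOn ℂ G U := by
    intro w hw
    apply DifferentiableAt.differentiableWithinAt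
    have hgC : DifferentiableAt ℂ gC w := by
      apply DifferentiableAt.cpow ((differentiableAt_const _).sub (differentiableAt_pow 2))
        (differentiableAt_const _)
      exact Complex.mem_slitPlane_iff.mpr (Or.inl hw)
    have hcoshd : DifferentiableAt ℂ (fun w => Complex.cosh ((s:ℂ) * gC w)) w :=
      ((differentiableAt_const _).mul hgC).ccosh
    exact (differentiableAt_const _).sub
      ((differentiableAt_const _).div (hcoshd.pow 2) (pow_ne_zero 2 (hcosh_ne w hw)))
  -- bound on U
  have hGbound : ∀ w ∈ U, ‖G w‖ ≤ M := by
    intro w hw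
    have h2 : Real.cos 1 ^ 2 ≤ ‖Complex.cosh ((s:ℂ) * gC w)‖ ^ 2 := by
      have := hcosh w hw
      nlinarith [norm_nonneg (Complex.cosh ((s:ℂ) * gC w))]
    calc ‖G w‖ ≤ ‖(1:ℂ)‖ + ‖2 / Complex.cosh ((s:ℂ) * gC w) ^ 2‖ := norm_sub_le _ _
      _ = 1 + 2 / ‖Complex.cosh ((s:ℂ) * gC w)‖ ^ 2 := by
          simp [map_div₀, map_pow]
      _ ≤ 1 + 2 / Real.cos 1 ^ 2 := by
          have hpos : (0:ℝ) < Real.cos 1 ^ 2 := by positivity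
          gcongr
      _ = M := rfl
  -- closed ball inside U
  have hball : Metric.closedBall ((u:ℂ)) rr ⊆ U := by
    intro w hw
    rw [Metric.mem_closedBall] at hw
    have h1 : |(w - (u:ℂ)).re| ≤ rr := le_trans (Complex.abs_re_le_norm _) (by rw [← dist_eq_norm]; exact hw)
    have h2 : |w.re| ≤ ustar + rr := by
      have : w.re = (w - (u:ℂ)).re + u := by simp
      rw [this]
      calc |(w - (u:ℂ)).re + u| ≤ |(w - (u:ℂ)).re| + |u| := abs_add_le _ _
        _ ≤ rr + ustar := add_le_add h1 hu
        _ = ustar + rr := by ring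
    have h3 : ustar + rr < 1 := by rw [hrrdef]; linarith
    have h4 : ((1:ℂ) - w ^ 2).re = 1 - (w.re * w.re - w.im * w.im) := by
      simp [pow_two, Complex.mul_re]
    rw [hUdef, Set.mem_setOf_eq, h4]
    nlinarith [abs_nonneg w.re, sq_abs w.re, abs_nonneg u]
  -- power series
  set R : NNReal := ⟨rr, hrr.le⟩ with hRdef
  have hR0 : 0 < R := by rw [← NNReal.coe_lt_coe]; exact hrr
  have hps : HasFPowerSeriesOnBall G (cauchyPowerSeries G (u:ℂ) R) (u:ℂ) R :=
    DifferentiableOn.hasFPowerSeriesOnBall (hGdiff.mono hball) hR0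
  set p := cauchyPowerSeries G (u:ℂ) (R:ℝ) with hpdef
  have hsphere : ∀ θ : ℝ, circleMap (u:ℂ) rr θ ∈ U := fun θ =>
    hball (circleMap_mem_closedBall _ hrr.le θ)
  have hcont : ContinuousOn (fun θ : ℝ => ‖G (circleMap (u:ℂ) rr θ)‖) (Set.uIcc 0 (2*Real.pi)) := by
    apply ContinuousOn.norm
    exact hGdiff.continuousOn.comp (Continuous.continuousOn (continuous_circleMap _ _))
      (fun θ _ => hsphere θ)
  have hint : ∫ θ in (0:ℝ)..(2*Real.pi), ‖G (circleMap (u:ℂ) rr θ)‖ ≤ 2*Real.pi * M := by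
    have h := intervalIntegral.integral_mono_on (μ := MeasureTheory.volume)
      (f := fun θ : ℝ => ‖G (circleMap (u:ℂ) rr θ)‖) (g := fun _ : ℝ => M)
      (by positivity : (0:ℝ) ≤ 2*Real.pi)
      (hcont.intervalIntegrable) (intervalIntegrable_const) (fun θ _ => hGbound _ (hsphere θ))
    refine le_trans h (le_of_eq ?_)
    rw [intervalIntegral.integral_const, smul_eq_mul, sub_zero]
  have hpm : ‖p m‖ ≤ M * (1/rr) ^ m := by
    have hb := norm_cauchyPowerSeries_le G (u:ℂ) rr m
    have habs : |rr| = rr := abs_of_pos hrr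
    rw [habs] at hb
    refine le_trans hb ?_
    have h2pi : (0:ℝ) < 2*Real.pi := by positivity
    have hleft : (2*Real.pi)⁻¹ * ∫ θ : ℝ in (0:ℝ)..(2*Real.pi), ‖G (circleMap (u:ℂ) rr θ)‖ ≤ M := by
      rw [inv_mul_le_iff₀ h2pi]
      linarith [hint]
    have hinv : rr⁻¹ ^ m = (1/rr) ^ m := by rw [one_div]
    rw [hinv]
    have hnn : (0:ℝ) ≤ (1/rr) ^ m := by positivity
    exact mul_le_mul_of_nonneg_right hleft hnn
  have hfact := hps.factorial_smul (y := (1:ℂ)) m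
  have hIter : ‖iteratedDeriv m G ((u:ℂ))‖ ≤ (m.factorial : ℝ) * (M * (1/rr) ^ m) := by
    rw [iteratedDeriv_eq_iteratedFDeriv, ← hfact, ← Nat.cast_smul_eq_nsmul ℂ, norm_smul]
    have hnm : ‖((m.factorial : ℕ) : ℂ)‖ = (m.factorial : ℝ) := by
      simp
    rw [hnm]
    have h1 : ‖p m (fun _ => (1:ℂ))‖ ≤ ‖p m‖ := by
      have h := (p m).le_opNorm (fun _ => (1:ℂ))
      simpa using h
    exact mul_le_mul_of_nonneg_left (le_trans h1 hpm) (by positivity)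
  -- transfer to the real function
  have hVU : ∀ v ∈ Set.Ioo (-1:ℝ) 1, ((v:ℝ):ℂ) ∈ U := by
    intro v hv
    have hc : ((1:ℂ) - (v:ℂ) ^ 2) = ((1 - v ^ 2 : ℝ) : ℂ) := by push_cast; ring
    rw [hUdef, Set.mem_setOf_eq, hc, Complex.ofReal_re]
    nlinarith [hv.1, hv.2]
  have hf : ∀ v ∈ Set.Ioo (-1:ℝ) 1,
      ((Real.cos (θK (γ v * (x - ξ))) : ℝ) : ℂ) = G ((v:ℝ):ℂ) := by
    intro v hv
    have hv1 : |v| < 1 := abs_lt.mpr ⟨hv.1, hv.2⟩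
    rw [cos_θK]
    show _ = 1 - 2 / Complex.cosh ((s:ℂ) * gC (v:ℂ)) ^ 2
    rw [gC_real hv1, ← Complex.ofReal_mul, ← Complex.ofReal_cosh]
    rw [show s * γ v = γ v * (x - ξ) by rw [hsdef]; ring]
    push_cast
    ring
  have htr := transfer hUopen hGdiff isOpen_Ioo hVU hf m u
    ⟨by linarith [(abs_le.mp hu).1], by linarith [(abs_le.mp hu).2]⟩
  -- final arithmetic
  obtain ⟨k, rfl⟩ : ∃ k, m = k + 3 := ⟨m - 3, by omega⟩
  have hm3 : (k + 3) - 3 = k := by omega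
  have hfacN : ((k+3).factorial : ℝ) = (k.factorial : ℝ) * ((k+1) * (k+2) * (k+3) : ℕ) := by
    have : (k+3).factorial = k.factorial * ((k+1) * (k+2) * (k+3)) := by
      rw [Nat.factorial_succ, Nat.factorial_succ, Nat.factorial_succ]; ring
    rw [this]; push_cast; ring
  have hprodN : ((k+1) * (k+2) * (k+3) : ℕ) ≤ 8 ^ (k+3) := by
    calc (k+1) * (k+2) * (k+3) ≤ (k+3) * (k+3) * (k+3) := by
          apply Nat.mul_le_mul (Nat.mul_le_mul (by omega) (by omega)) (le_refl _)
      _ = (k+3) ^ 3 := by ring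
      _ ≤ (2 ^ (k+3)) ^ 3 := Nat.pow_le_pow_left (Nat.lt_two_pow_self).le 3
      _ = 8 ^ (k+3) := by rw [← pow_mul, mul_comm, pow_mul]; norm_num
  have hprodR : (((k+1) * (k+2) * (k+3) : ℕ) : ℝ) ≤ (8:ℝ) ^ (k+3) := by
    exact_mod_cast hprodN
  have hMle : M ≤ M ^ (k+3) := le_self_pow₀ hM (by omega)
  have hCge : 8 * M / rr ≤ C := le_max_right _ _
  have hCpos : (0:ℝ) < C := lt_of_lt_of_le one_pos hC1
  have habs9 : |iteratedDeriv (k+3) (fun u' => Real.cos (θK (γ u' * (x - ξ)))) u|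
      ≤ ‖iteratedDeriv (k+3) G ((u:ℂ))‖ := by
    rw [htr]
    exact Complex.abs_re_le_norm _
  rw [hm3]
  calc |iteratedDeriv (k+3) (fun u' => Real.cos (θK (γ u' * (x - ξ)))) u|
      ≤ ‖iteratedDeriv (k+3) G ((u:ℂ))‖ := habs9
    _ ≤ ((k+3).factorial : ℝ) * (M * (1/rr) ^ (k+3)) := hIter
    _ = (k.factorial : ℝ) * ((((k+1) * (k+2) * (k+3) : ℕ) : ℝ) * (M * (1/rr) ^ (k+3))) := by
        rw [hfacN]; ring
    _ ≤ (k.factorial : ℝ) * ((8:ℝ) ^ (k+3) * (M ^ (k+3) * (1/rr) ^ (k+3))) := by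
        apply mul_le_mul_of_nonneg_left _ (by positivity)
        apply mul_le_mul hprodR (mul_le_mul_of_nonneg_right hMle (by positivity))
          (by positivity) (by positivity)
    _ = (k.factorial : ℝ) * (8 * M / rr) ^ (k+3) := by
        rw [show (8 * M / rr) = 8 * (M * (1/rr)) by ring, mul_pow, mul_pow]
    _ ≤ (k.factorial : ℝ) * C ^ (k+3) := by
        apply mul_le_mul_of_nonneg_left _ (by positivity)
        apply pow_le_pow_left₀ (by positivity) hCge
    _ ≤ (k.factorial : ℝ) * C ^ (2 * (k+3) - 3) := by
        apply mul_le_mul_of_nonneg_left _ (by positivity)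
        apply pow_le_pow_right₀ hC1 (by omega)
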